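/- For every θ > 0, every n ≥ 1 and every t > 0, the number of leaves L_n^{(θ)} of a Hoppe tree with n nodes and parameter θ satisfies the concentration inequality P(|L_n^{(θ)} − E[L_n^{(θ)}]| ≥ t) ≤ 2 exp(−6t²/(n + θ + 1)). -/

import Mathlib

open MeasureTheory ProbabilityTheory Real Filter Topology

noncomputable section

/-- Depth of node `i` in the Hoppe tree grown from the parent choices `U`:
`U k ω` is the parent of node `k + 2` (a node in `{1, …, k + 1}`, almost surely);
node `1` is the root. The `min` clipping is irrelevant almost surely. -/
def hoppeDepth {Ω : Type*} (U : ℕ → Ω → ℕ) (ω : Ω) : ℕ → ℕ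
  | 0 => 0
  | 1 => 0
  | n + 2 => hoppeDepth U ω (min (U n ω) (n + 1)) + 1
  decreasing_by omega

/-- The parent choices of a Hoppe tree with parameter `θ`: `U k` is the (random) parent
of node `k + 2`, the choices being independent, node `k + 2` choosing its parent among
nodes `1, …, k + 1`, namely the root `1` with probability `θ / (θ + k)` and each other
node with probability `1 / (θ + k)`. -/
structure IsHoppeParents {Ω : Type*} [MeasurableSpace Ω] (θ : ℝ) (μ : Measure Ω)
    (U : ℕ → Ω → ℕ) : Prop where
  meas : ∀ k, Measurable (U k)
  indep : iIndepFun U μ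
  root : ∀ k : ℕ, μ {ω | U k ω = 1} = ENNReal.ofReal (θ / (θ + k))
  nonroot : ∀ k j : ℕ, 2 ≤ j → j ≤ k + 1 → μ {ω | U k ω = j} = ENNReal.ofReal (1 / (θ + k))
  range : ∀ k : ℕ, μ {ω | 1 ≤ U k ω ∧ U k ω ≤ k + 1} = 1

/-- Height of the Hoppe tree with `n` nodes: maximal depth over nodes `1, …, n`. -/
def hoppeHeight {Ω : Type*} (U : ℕ → Ω → ℕ) (ω : Ω) (n : ℕ) : ℕ :=
  (Finset.Icc 1 n).sup (fun i => hoppeDepth U ω i)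

/-- Internal path length of the Hoppe tree with `n` nodes: sum of the depths of
nodes `1, …, n`. -/
def hoppePathLength {Ω : Type*} (U : ℕ → Ω → ℕ) (ω : Ω) (n : ℕ) : ℕ :=
  ∑ i ∈ Finset.Icc 1 n, hoppeDepth U ω i

open Classical in
/-- Number of leaves of the Hoppe tree with `n` nodes: nodes `j ∈ {1, …, n}` that are
the parent of no node `k ∈ {2, …, n}`. -/
def hoppeLeafCount {Ω : Type*} (U : ℕ → Ω → ℕ) (ω : Ω) (n : ℕ) : ℕ :=
  ((Finset.Icc 1 n).filter (fun j => ∀ k ∈ Finset.Icc 2 n, U (k - 2) ω ≠ j)).card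

namespace HoppeAux

attribute [local instance] Classical.propDecidable


/-- Hoeffding's scalar inequality: `1 - p + p e^h ≤ exp (p h + h²/8)` for `p ∈ [0,1]`. -/
lemma hoeffding_scalar {p : ℝ} (hp0 : 0 ≤ p) (hp1 : p ≤ 1) (h : ℝ) :
    1 - p + p * Real.exp h ≤ Real.exp (p * h + h ^ 2 / 8) := by
  have hD : ∀ x : ℝ, 0 < 1 - p + p * Real.exp x := by
    intro x
    rcases eq_or_lt_of_le hp0 with h0 | h0
    · simp [← h0]
    · have := Real.exp_pos x
      nlinarith
  set D : ℝ → ℝ := fun x => 1 - p + p * Real.exp x with hDdef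
  set f : ℝ → ℝ := fun x => p * x + x ^ 2 / 8 - Real.log (D x) with hfdef
  set f' : ℝ → ℝ := fun x => p + x / 4 - p * Real.exp x / D x with hf'def
  have hderiv : ∀ x : ℝ, HasDerivAt f (f' x) x := by
    intro x
    have hDder : HasDerivAt D (p * Real.exp x) x := by
      exact ((Real.hasDerivAt_exp x).const_mul p).const_add (1 - p)
    have h1 : HasDerivAt (fun x : ℝ => p * x) p x := by
      simpa using (hasDerivAt_id x).const_mul p
    have h2 : HasDerivAt (fun x : ℝ => x ^ 2 / 8) (x / 4) x := by
      have := (hasDerivAt_pow 2 x).div_const 8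
      refine this.congr_deriv ?_
      rw [show (2:ℕ) - 1 = 1 from rfl]; push_cast; ring
    have h3 : HasDerivAt (fun x => Real.log (D x)) (p * Real.exp x / D x) x :=
      hDder.log (hD x).ne'
    exact (h1.add h2).sub h3
  have hderiv2 : ∀ x : ℝ, HasDerivAt f' (1 / 4 - p * Real.exp x * (1 - p) / (D x) ^ 2) x := by
    intro x
    have hDder : HasDerivAt D (p * Real.exp x) x := by
      exact ((Real.hasDerivAt_exp x).const_mul p).const_add (1 - p)
    have hN : HasDerivAt (fun x => p * Real.exp x) (p * Real.exp x) x :=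
      (Real.hasDerivAt_exp x).const_mul p
    have hq : HasDerivAt (fun x => p * Real.exp x / D x)
        ((p * Real.exp x * D x - p * Real.exp x * (p * Real.exp x)) / (D x) ^ 2) x :=
      hN.div hDder (hD x).ne'
    have h1 : HasDerivAt (fun x : ℝ => p + x / 4) (1 / 4) x := by
      simpa using ((hasDerivAt_id x).div_const 4).const_add p
    have := h1.sub hq
    refine this.congr_deriv ?_
    have : D x = 1 - p + p * Real.exp x := rfl
    congr 2; rw [this]
    ring
  have hf'mono : Monotone f' := by
    have hdiff : Differentiable ℝ f' := fun x => (hderiv2 x).differentiableAt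
    refine monotone_of_deriv_nonneg hdiff ?_
    intro x
    rw [(hderiv2 x).deriv]
    have hDx := hD x
    have hE := Real.exp_pos x
    have key : 4 * (p * Real.exp x * (1 - p)) ≤ (D x) ^ 2 := by
      have : D x = 1 - p + p * Real.exp x := rfl
      nlinarith [sq_nonneg (1 - p - p * Real.exp x)]
    have h2 : p * Real.exp x * (1 - p) / (D x) ^ 2 ≤ 1 / 4 := by
      rw [div_le_div_iff₀ (by positivity) (by norm_num)]
      nlinarith
    linarith
  have hf'0 : f' 0 = 0 := by
    simp [hf'def, hDdef]
  have hf0 : f 0 = 0 := by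
    simp [hfdef, hDdef]
  have hfnonneg : ∀ x : ℝ, 0 ≤ f x := by
    intro x
    rcases le_total 0 x with hx | hx
    · have hmono : MonotoneOn f (Set.Ici (0 : ℝ)) := by
        refine monotoneOn_of_deriv_nonneg (convex_Ici 0)
          ((Differentiable.continuous (fun x => (hderiv x).differentiableAt)).continuousOn)
          (fun y hy => (hderiv y).differentiableAt.differentiableWithinAt) ?_
        · intro y hy
          rw [(hderiv y).deriv]
          have : f' 0 ≤ f' y := hf'mono (le_of_lt (by simpa [interior_Ici] using hy))
          simpa [hf'0] using this
      have := hmono (Set.self_mem_Ici) (Set.mem_Ici.2 hx) hx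
      simpa [hf0] using this
    · have hmono : AntitoneOn f (Set.Iic (0 : ℝ)) := by
        refine antitoneOn_of_deriv_nonpos (convex_Iic 0)
          ((Differentiable.continuous (fun x => (hderiv x).differentiableAt)).continuousOn)
          (fun y hy => (hderiv y).differentiableAt.differentiableWithinAt) ?_
        · intro y hy
          rw [(hderiv y).deriv]
          have : f' y ≤ f' 0 := hf'mono (le_of_lt (by simpa [interior_Iic] using hy))
          simpa [hf'0] using this
      have := hmono (Set.mem_Iic.2 hx) (Set.self_mem_Iic) hx
      simpa [hf0] using this
  have := hfnonneg h
  have hlog : Real.log (D h) ≤ p * h + h ^ 2 / 8 := by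
    simp only [hfdef] at this; linarith
  show D h ≤ _
  calc D h = Real.exp (Real.log (D h)) := (Real.exp_log (hD h)).symm
    _ ≤ Real.exp (p * h + h ^ 2 / 8) := Real.exp_le_exp.2 hlog





lemma integrable_of_bounded_nat {ν : Measure ℕ} [IsProbabilityMeasure ν] {g : ℕ → ℝ} {C : ℝ}
    (hC : ∀ u, |g u| ≤ C) : Integrable g ν := by
  refine Integrable.mono' (integrable_const C) ?_ ?_
  · exact (measurable_of_countable g).aestronglyMeasurable
  · exact Filter.Eventually.of_forall fun u => by simpa [Real.norm_eq_abs] using hC u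

def Hfun (m : ℕ) (ν : ℕ → Measure ℕ) (G : (ℕ → ℕ) → ℝ) (k : ℕ) (v : ℕ → ℕ) : ℝ :=
  if k < m then ∫ u, Hfun m ν G (k + 1) (Function.update v k u) ∂(ν k) else G v
termination_by m - k

def qProd (ν : ℕ → Measure ℕ) (m r j : ℕ) : ℝ :=
  ∏ i ∈ Finset.Ico r m, (1 - (ν i {j}).toReal)

def eAux (ν : ℕ → Measure ℕ) (n m k r j : ℕ) (v : ℕ → ℕ) : ℝ :=
  if 1 ≤ j ∧ j ≤ n ∧ (∀ i < r, i ≠ k → v i ≠ j) then qProd ν m r j else 0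

def leafG (n : ℕ) (v : ℕ → ℕ) : ℝ :=
  ∑ j ∈ Finset.Icc 1 n, (if ∀ i ∈ Finset.range (n - 1), v i ≠ j then (1:ℝ) else 0)

variable {m : ℕ} {ν : ℕ → Measure ℕ} {G : (ℕ → ℕ) → ℝ}

lemma Hfun_of_lt {k : ℕ} (h : k < m) (v : ℕ → ℕ) :
    Hfun m ν G k v = ∫ u, Hfun m ν G (k + 1) (Function.update v k u) ∂(ν k) := by
  rw [Hfun, if_pos h]

lemma Hfun_of_ge {k : ℕ} (h : m ≤ k) (v : ℕ → ℕ) : Hfun m ν G k v = G v := by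
  rw [Hfun, if_neg (by omega)]

lemma Hfun_bound [∀ i, IsProbabilityMeasure (ν i)] {C : ℝ}
    (hG : ∀ v, 0 ≤ G v ∧ G v ≤ C) (k : ℕ) (v : ℕ → ℕ) :
    0 ≤ Hfun m ν G k v ∧ Hfun m ν G k v ≤ C := by
  have hC : 0 ≤ C := le_trans (hG (fun _ => 0)).1 (hG (fun _ => 0)).2
  suffices H : ∀ d k v, m - k ≤ d → 0 ≤ Hfun m ν G k v ∧ Hfun m ν G k v ≤ C from
    H (m - k) k v le_rfl
  intro d
  induction d with
  | zero => intro k v h; rw [Hfun_of_ge (by omega) v]; exact hG v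
  | succ d ih =>
    intro k v h
    by_cases hk : k < m
    · rw [Hfun_of_lt hk v]
      have hint : Integrable (fun u => Hfun m ν G (k + 1) (Function.update v k u)) (ν k) :=
        integrable_of_bounded_nat (C := C) fun u => abs_le.2
          ⟨by linarith [(ih (k+1) (Function.update v k u) (by omega)).1],
           (ih (k+1) (Function.update v k u) (by omega)).2⟩
      constructor
      · exact integral_nonneg fun u => (ih (k+1) _ (by omega)).1
      · calc ∫ u, Hfun m ν G (k + 1) (Function.update v k u) ∂(ν k)
            ≤ ∫ _, C ∂(ν k) := integral_mono hint (integrable_const C)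
              (fun u => (ih (k+1) _ (by omega)).2)
          _ = C := by simp
    · rw [Hfun_of_ge (by omega) v]; exact hG v

lemma Hfun_dependsOn (hGdep : ∀ v w : ℕ → ℕ, (∀ i < m, v i = w i) → G v = G w) (k : ℕ)
    (v w : ℕ → ℕ) (hvw : ∀ i < k, v i = w i) : Hfun m ν G k v = Hfun m ν G k w := by
  suffices H : ∀ d k (v w : ℕ → ℕ), m - k ≤ d → (∀ i < k, v i = w i) →
      Hfun m ν G k v = Hfun m ν G k w from H (m - k) k v w le_rfl hvw
  intro d
  induction d with
  | zero =>
    intro k v w h hvw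
    rw [Hfun_of_ge (by omega) v, Hfun_of_ge (by omega) w]
    exact hGdep v w fun i hi => hvw i (by omega)
  | succ d ih =>
    intro k v w h hvw
    by_cases hk : k < m
    · rw [Hfun_of_lt hk v, Hfun_of_lt hk w]
      refine integral_congr_ae (Filter.Eventually.of_forall fun u => ?_)
      refine ih (k+1) _ _ (by omega) fun i hi => ?_
      rcases Nat.lt_succ_iff_lt_or_eq.1 hi with hik | hik
      · rw [Function.update_apply, Function.update_apply, if_neg (by omega), if_neg (by omega)]
        exact hvw i hik
      · subst hik; simp
    · rw [Hfun_of_ge (by omega) v, Hfun_of_ge (by omega) w]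
      exact hGdep v w fun i hi => hvw i (by omega)


attribute [local instance] Classical.propDecidable









lemma hoeffding_integral (ν : Measure ℕ) [IsProbabilityMeasure ν] (g : ℕ → ℝ) (a b : ℝ)
    (hab : a ≤ b) (hg : ∀ᵐ u ∂ν, g u ∈ Set.Icc a b) :
    ∫ u, Real.exp (g u) ∂ν ≤ Real.exp ((∫ u, g u ∂ν) + (b - a) ^ 2 / 8) := by
  have hgi : Integrable g ν := by
    -- g is a.e. bounded; replace g by a bounded modification
    have : Integrable (fun u => max a (min b (g u))) ν :=
      integrable_of_bounded_nat (C := max |a| |b|) (fun u => by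
        rw [abs_le]
        constructor
        · exact le_trans (neg_le_neg (le_max_left |a| |b|)) (le_trans (neg_abs_le a) (le_max_left _ _))
        · exact le_trans (max_le (le_trans (le_abs_self a) (le_max_left _ _))
            (le_trans (min_le_left _ _) (le_trans (le_abs_self b) (le_max_right _ _)))) le_rfl)
    refine this.congr ?_
    filter_upwards [hg] with u hu
    rw [min_eq_right hu.2, max_eq_right hu.1]
  set m := ∫ u, g u ∂ν with hm
  have hma : a ≤ m := by
    rw [hm]
    calc a = ∫ _, a ∂ν := by simp
      _ ≤ _ := integral_mono_ae (integrable_const a) hgi (by filter_upwards [hg] with u hu using hu.1)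
  have hmb : m ≤ b := by
    rw [hm]
    calc m ≤ ∫ _, b ∂ν := integral_mono_ae hgi (integrable_const b)
              (by filter_upwards [hg] with u hu using hu.2)
      _ = b := by simp
  rcases eq_or_lt_of_le hab with heq | hlt
  · -- a = b : g is a.e. constant
    have hgc : ∀ᵐ u ∂ν, g u = a := by
      filter_upwards [hg] with u hu
      exact le_antisymm (heq ▸ hu.2) hu.1
    have h1 : ∫ u, Real.exp (g u) ∂ν = Real.exp a := by
      rw [integral_congr_ae (g := fun _ => Real.exp a) (by filter_upwards [hgc] with u hu; rw [hu])]
      simp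
    have h2 : m = a := by
      rw [hm, integral_congr_ae (g := fun _ => a) hgc]; simp
    rw [h1, h2, ← heq]
    simp [Real.exp_le_exp]
  · -- a < b
    have hba : 0 < b - a := by linarith
    -- pointwise convexity bound
    have hpt : ∀ᵐ u ∂ν, Real.exp (g u) ≤
        ((b - g u) * Real.exp a + (g u - a) * Real.exp b) / (b - a) := by
      filter_upwards [hg] with u hu
      have key := convexOn_exp.2 (Set.mem_univ a) (Set.mem_univ b)
        (show (0:ℝ) ≤ (b - g u)/(b - a) from div_nonneg (by linarith [hu.2]) hba.le)
        (show (0:ℝ) ≤ (g u - a)/(b - a) from div_nonneg (by linarith [hu.1]) hba.le)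
        (by field_simp; ring)
      have harg : (b - g u)/(b - a) * a + (g u - a)/(b - a) * b = g u := by
        field_simp; ring
      rw [smul_eq_mul, smul_eq_mul, harg] at key
      calc Real.exp (g u) ≤ (b - g u)/(b-a) * Real.exp a + (g u - a)/(b-a) * Real.exp b := key
        _ = ((b - g u) * Real.exp a + (g u - a) * Real.exp b) / (b - a) := by ring
    have hint : ∫ u, Real.exp (g u) ∂ν ≤ ((b - m) * Real.exp a + (m - a) * Real.exp b) / (b - a) := by
      have hI1 : Integrable (fun u => b - g u) ν := (integrable_const b).sub hgi
      have hI2 : Integrable (fun u => g u - a) ν := hgi.sub (integrable_const a)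
      have hrhs : Integrable (fun u => ((b - g u) * Real.exp a + (g u - a) * Real.exp b) / (b - a)) ν :=
        ((hI1.mul_const _).add (hI2.mul_const _)).div_const _
      have hexpint : Integrable (fun u => Real.exp (g u)) ν := by
        refine Integrable.mono' (integrable_const (Real.exp b))
          ((measurable_of_countable _).aestronglyMeasurable) ?_
        filter_upwards [hg] with u hu
        rw [Real.norm_eq_abs, abs_of_nonneg (Real.exp_pos _).le]
        exact Real.exp_le_exp.2 hu.2
      calc ∫ u, Real.exp (g u) ∂ν
          ≤ ∫ u, ((b - g u) * Real.exp a + (g u - a) * Real.exp b) / (b - a) ∂ν :=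
            integral_mono_ae hexpint hrhs hpt
        _ = ((b - m) * Real.exp a + (m - a) * Real.exp b) / (b - a) := by
            rw [integral_div]
            congr 1
            rw [integral_add (hI1.mul_const _) (hI2.mul_const _),
              integral_mul_const, integral_mul_const]
            congr 2
            · rw [integral_sub (integrable_const b) hgi]; simp [hm]
            · rw [integral_sub hgi (integrable_const a)]; simp [hm]
    -- scalar step
    set p := (m - a) / (b - a) with hp
    have hp0 : 0 ≤ p := div_nonneg (by linarith) hba.le
    have hp1 : p ≤ 1 := by rw [hp, div_le_one hba]; linarith
    have hscalar := hoeffding_scalar hp0 hp1 (b - a)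
    have hfin : ((b - m) * Real.exp a + (m - a) * Real.exp b) / (b - a)
        = Real.exp a * (1 - p + p * Real.exp (b - a)) := by
      have hb : Real.exp b = Real.exp a * Real.exp (b - a) := by
        rw [← Real.exp_add]; ring_nf
      rw [hb, hp]
      field_simp
      ring
    have hpe : p * (b - a) = m - a := by
      rw [hp]; field_simp
    calc ∫ u, Real.exp (g u) ∂ν
        ≤ ((b - m) * Real.exp a + (m - a) * Real.exp b) / (b - a) := hint
      _ = Real.exp a * (1 - p + p * Real.exp (b - a)) := hfin
      _ ≤ Real.exp a * Real.exp (p * (b - a) + (b - a) ^ 2 / 8) :=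
          mul_le_mul_of_nonneg_left (hoeffding_scalar hp0 hp1 (b - a)) (Real.exp_pos a).le
      _ = Real.exp (m + (b - a) ^ 2 / 8) := by
          rw [← Real.exp_add, hpe]; ring_nf


attribute [local instance] Classical.propDecidable

lemma leafG_update_sub {n m k : ℕ} (ν : ℕ → Measure ℕ) (hk : k < m) (hn : n = m + 1)
    (v : ℕ → ℕ) (u u' : ℕ) :
    leafG n (Function.update v k u) - leafG n (Function.update v k u')
      = eAux ν n m k m u' v - eAux ν n m k m u v := by
  have hm : n - 1 = m := by omega
  have hsplit : ∀ (u j : ℕ),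
      (if ∀ i ∈ Finset.range (n - 1), Function.update v k u i ≠ j then (1:ℝ) else 0)
        = (if (∀ i < m, i ≠ k → v i ≠ j) then (1:ℝ) else 0)
          - (if (j = u ∧ ∀ i < m, i ≠ k → v i ≠ j) then (1:ℝ) else 0) := by
    intro u j
    by_cases hA : ∀ i < m, i ≠ k → v i ≠ j
    · by_cases hj : j = u
      · rw [if_neg, if_pos hA, if_pos ⟨hj, hA⟩]
        · norm_num
        · intro hall
          have := hall k (by rw [Finset.mem_range, hm]; exact hk)
          simp [hj] at this
      · rw [if_pos, if_pos hA, if_neg (by tauto)]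
        · norm_num
        · intro i hi
          rw [Finset.mem_range, hm] at hi
          rw [Function.update_apply]
          split_ifs with hik
          · exact fun hh => hj hh.symm
          · exact hA i hi hik
    · push_neg at hA
      obtain ⟨i, hi1, hi2, hi3⟩ := hA
      rw [if_neg, if_neg (by push_neg; exact ⟨i, hi1, hi2, hi3⟩), if_neg (by tauto)]
      · norm_num
      · intro hall
        have := hall i (by rw [Finset.mem_range, hm]; exact hi1)
        rw [Function.update_apply, if_neg hi2] at this
        exact this hi3
  have hT : ∀ u : ℕ,
      (∑ j ∈ Finset.Icc 1 n, if (j = u ∧ ∀ i < m, i ≠ k → v i ≠ j) then (1:ℝ) else 0)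
        = if (1 ≤ u ∧ u ≤ n ∧ (∀ i < m, i ≠ k → v i ≠ u)) then 1 else 0 := by
    intro u
    have : ∀ j, (if (j = u ∧ ∀ i < m, i ≠ k → v i ≠ j) then (1:ℝ) else 0)
        = if j = u then (if (∀ i < m, i ≠ k → v i ≠ j) then (1:ℝ) else 0) else 0 := by
      intro j
      by_cases h1 : j = u <;> by_cases h2 : ∀ i < m, i ≠ k → v i ≠ j <;> simp [h1, h2]
    rw [Finset.sum_congr rfl fun j _ => this j, Finset.sum_ite_eq' (Finset.Icc 1 n) u]
    by_cases hu : u ∈ Finset.Icc 1 n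
    · rw [if_pos hu]
      rw [Finset.mem_Icc] at hu
      by_cases h2 : ∀ i < m, i ≠ k → v i ≠ u
      · rw [if_pos h2, if_pos ⟨hu.1, hu.2, h2⟩]
      · rw [if_neg h2, if_neg (by tauto)]
    · rw [if_neg hu]
      rw [Finset.mem_Icc] at hu
      rw [if_neg (by tauto)]
  have hL : ∀ u : ℕ, leafG n (Function.update v k u)
      = (∑ j ∈ Finset.Icc 1 n, if (∀ i < m, i ≠ k → v i ≠ j) then (1:ℝ) else 0)
        - (if (1 ≤ u ∧ u ≤ n ∧ (∀ i < m, i ≠ k → v i ≠ u)) then 1 else 0) := by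
    intro u
    rw [leafG, Finset.sum_congr rfl fun j _ => hsplit u j, Finset.sum_sub_distrib, hT u]
  have heA : ∀ u : ℕ, eAux ν n m k m u v
      = if (1 ≤ u ∧ u ≤ n ∧ (∀ i < m, i ≠ k → v i ≠ u)) then (1:ℝ) else 0 := by
    intro u
    rw [eAux, qProd, Finset.Ico_self, Finset.prod_empty]
  rw [hL u, hL u', heA u, heA u']
  ring

lemma eAux_integral {n m k r : ℕ} {ν : ℕ → Measure ℕ} [∀ i : ℕ, IsProbabilityMeasure (ν i)]
    (hkr : k < r) (hrm : r < m) (j : ℕ) (v : ℕ → ℕ) :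
    ∫ w, eAux ν n m k (r + 1) j (Function.update v r w) ∂(ν r) = eAux ν n m k r j v := by
  by_cases hbase : 1 ≤ j ∧ j ≤ n ∧ (∀ i < r, i ≠ k → v i ≠ j)
  · have hpt : ∀ w, eAux ν n m k (r + 1) j (Function.update v r w)
        = if w = j then 0 else qProd ν m (r + 1) j := by
      intro w
      rw [eAux]
      by_cases hw : w = j
      · rw [if_neg, if_pos hw]
        intro hcond
        have := hcond.2.2 r (by omega) (by omega)
        simp [hw] at this
      · rw [if_pos, if_neg hw]
        refine ⟨hbase.1, hbase.2.1, fun i hi hik => ?_⟩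
        rcases Nat.lt_succ_iff_lt_or_eq.1 hi with h' | h'
        · rw [Function.update_apply, if_neg (by omega)]
          exact hbase.2.2 i h' hik
        · subst h'; simpa using hw
    rw [integral_congr_ae (Filter.Eventually.of_forall hpt)]
    have hsplit : (fun w => if w = j then (0:ℝ) else qProd ν m (r + 1) j)
        = fun w => qProd ν m (r + 1) j
          - Set.indicator {j} (fun _ => qProd ν m (r + 1) j) w := by
      funext w
      by_cases hw : w = j <;> simp [hw, Set.indicator]
    rw [hsplit, integral_sub (integrable_const _)
      ((integrable_const (qProd ν m (r + 1) j)).indicator (MeasurableSet.singleton j)),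
      integral_const, integral_indicator_const _ (MeasurableSet.singleton j)]
    simp only [measureReal_def, measure_univ, ENNReal.toReal_one, one_smul, smul_eq_mul]
    rw [eAux, if_pos hbase, qProd, qProd, Finset.prod_eq_prod_Ico_succ_bot hrm]
    ring
  · have hpt : ∀ w, eAux ν n m k (r + 1) j (Function.update v r w) = 0 := by
      intro w
      rw [eAux, if_neg]
      intro hcond
      refine hbase ⟨hcond.1, hcond.2.1, fun i hi hik => ?_⟩
      have := hcond.2.2 i (by omega) hik
      rwa [Function.update_apply, if_neg (by omega)] at this
    rw [integral_congr_ae (Filter.Eventually.of_forall hpt), eAux, if_neg hbase]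
    simp

lemma Hfun_eAux_diff {n m k : ℕ} {ν : ℕ → Measure ℕ} [∀ i : ℕ, IsProbabilityMeasure (ν i)]
    (hn : n = m + 1) (hk : k < m) :
    ∀ r, k < r → r ≤ m → ∀ (v : ℕ → ℕ) (u u' : ℕ),
    Hfun m ν (leafG n) r (Function.update v k u) - Hfun m ν (leafG n) r (Function.update v k u')
      = eAux ν n m k r u' v - eAux ν n m k r u v := by
  suffices H : ∀ d r, k < r → r ≤ m → m - r ≤ d → ∀ (v : ℕ → ℕ) (u u' : ℕ),
      Hfun m ν (leafG n) r (Function.update v k u)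
        - Hfun m ν (leafG n) r (Function.update v k u')
        = eAux ν n m k r u' v - eAux ν n m k r u v from
    fun r h1 h2 v u u' => H (m - r) r h1 h2 le_rfl v u u'
  intro d
  induction d with
  | zero =>
    intro r h1 h2 h3 v u u'
    have hrm : r = m := by omega
    subst hrm
    rw [Hfun_of_ge le_rfl, Hfun_of_ge le_rfl]
    exact leafG_update_sub ν hk hn v u u'
  | succ d ih =>
    intro r h1 h2 h3 v u u'
    by_cases hrm : r < m
    · rw [Hfun_of_lt hrm, Hfun_of_lt hrm]
      have hcomm : ∀ (z w : ℕ), Function.update (Function.update v k z) r w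
          = Function.update (Function.update v r w) k z := fun z w =>
        Function.update_comm (by omega) _ _ _
      have hbd : ∀ z : ℕ, Integrable (fun w =>
          Hfun m ν (leafG n) (r+1) (Function.update (Function.update v k z) r w)) (ν r) := by
        intro z
        refine integrable_of_bounded_nat (C := n) fun w => ?_
        have := Hfun_bound (m := m) (ν := ν) (G := leafG n) (C := n)
          (fun v' => ⟨Finset.sum_nonneg fun j _ => by positivity, by
            calc leafG n v' ≤ ∑ _j ∈ Finset.Icc 1 n, (1:ℝ) :=
                  Finset.sum_le_sum fun j _ => by split_ifs <;> norm_num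
              _ = n := by simp⟩) (r+1) (Function.update (Function.update v k z) r w)
        rw [abs_le]
        exact ⟨by linarith [this.1], this.2⟩
      rw [← integral_sub (hbd u) (hbd u')]
      have : ∀ w, Hfun m ν (leafG n) (r+1) (Function.update (Function.update v k u) r w)
          - Hfun m ν (leafG n) (r+1) (Function.update (Function.update v k u') r w)
          = eAux ν n m k (r+1) u' (Function.update v r w)
            - eAux ν n m k (r+1) u (Function.update v r w) := by
        intro w
        rw [hcomm u w, hcomm u' w]
        exact ih (r+1) (by omega) (by omega) (by omega) (Function.update v r w) u u'
      rw [integral_congr_ae (Filter.Eventually.of_forall this),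
        integral_sub ?_ ?_, eAux_integral (by omega) hrm u' v, eAux_integral (by omega) hrm u v]
      · refine integrable_of_bounded_nat (C := 1) fun w => ?_
        rw [eAux]
        split_ifs with h
        · rw [abs_le]
          constructor
          · refine le_trans (by norm_num) (Finset.prod_nonneg fun i _ => ?_)
            have h1 : (ν i {u'}) ≤ 1 := prob_le_one
            have := ENNReal.toReal_mono (by simp) h1
            simp at this
            linarith
          · refine Finset.prod_le_one (fun i _ => ?_) (fun i _ => ?_)
            · have h1 : (ν i {u'}) ≤ 1 := prob_le_one
              have := ENNReal.toReal_mono (by simp) h1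
              simp at this
              linarith
            · simp [ENNReal.toReal_nonneg]
        · simp
      · refine integrable_of_bounded_nat (C := 1) fun w => ?_
        rw [eAux]
        split_ifs with h
        · rw [abs_le]
          constructor
          · refine le_trans (by norm_num) (Finset.prod_nonneg fun i _ => ?_)
            have h1 : (ν i {u}) ≤ 1 := prob_le_one
            have := ENNReal.toReal_mono (by simp) h1
            simp at this
            linarith
          · refine Finset.prod_le_one (fun i _ => ?_) (fun i _ => ?_)
            · have h1 : (ν i {u}) ≤ 1 := prob_le_one
              have := ENNReal.toReal_mono (by simp) h1
              simp at this
              linarith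
            · simp [ENNReal.toReal_nonneg]
        · simp
    · have hrm2 : r = m := by omega
      subst hrm2
      rw [Hfun_of_ge le_rfl, Hfun_of_ge le_rfl]
      exact leafG_update_sub ν hk hn v u u'



lemma integral_step {Ω : Type*} [MeasurableSpace Ω] (μ : Measure Ω) [IsProbabilityMeasure μ]
    (U : ℕ → Ω → ℕ) (hmeas : ∀ i, Measurable (U i))
    (hindep : iIndepFun U μ)
    (k : ℕ) (h : (Fin k → ℕ) → ℕ → ℝ) (C : ℝ) (hC : ∀ x u, |h x u| ≤ C) :
    ∫ ω, h (fun i => U i ω) (U k ω) ∂μ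
      = ∫ ω, ∫ u, h (fun i => U i ω) u ∂(μ.map (U k)) ∂μ := by
  set X : Ω → (Fin k → ℕ) := fun ω i => U i ω with hXdef
  have hX : Measurable X := measurable_pi_lambda _ fun i => hmeas i
  have hY : Measurable (U k) := hmeas k
  have hST : Disjoint (Finset.range k) ({k} : Finset ℕ) :=
    Finset.disjoint_singleton_right.2 (by simp)
  have h1 := hindep.indepFun_finset (Finset.range k) {k} hST hmeas
  have h2 : IndepFun X (U k) μ := by
    have := h1.comp
      (φ := fun (x : (i : ↥(Finset.range k)) → ℕ) (i : Fin k) => x ⟨i, Finset.mem_range.2 i.isLt⟩)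
      (ψ := fun (y : (i : ↥({k} : Finset ℕ)) → ℕ) => y ⟨k, Finset.mem_singleton_self k⟩)
      (measurable_of_countable _) (measurable_of_countable _)
    exact this
  have hmap : μ.map (fun ω => (X ω, U k ω)) = (μ.map X).prod (μ.map (U k)) :=
    (indepFun_iff_map_prod_eq_prod_map_map hX.aemeasurable hY.aemeasurable).1 h2
  have hpair : Measurable (fun ω => (X ω, U k ω)) := hX.prodMk hY
  haveI : IsProbabilityMeasure (μ.map X) := Measure.isProbabilityMeasure_map hX.aemeasurable
  haveI : IsProbabilityMeasure (μ.map (U k)) := Measure.isProbabilityMeasure_map hY.aemeasurable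
  have hint : Integrable (fun p : (Fin k → ℕ) × ℕ => h p.1 p.2)
      ((μ.map X).prod (μ.map (U k))) := by
    refine Integrable.mono' (integrable_const C)
      ((measurable_of_countable _).aestronglyMeasurable)
      (Filter.Eventually.of_forall fun p => by simpa [Real.norm_eq_abs] using hC p.1 p.2)
  calc ∫ ω, h (X ω) (U k ω) ∂μ
      = ∫ p : (Fin k → ℕ) × ℕ, h p.1 p.2 ∂(μ.map (fun ω => (X ω, U k ω))) :=
        (integral_map (f := fun p : (Fin k → ℕ) × ℕ => h p.1 p.2) hpair.aemeasurable ((measurable_of_countable _).aestronglyMeasurable)).symm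
    _ = ∫ p : (Fin k → ℕ) × ℕ, h p.1 p.2 ∂((μ.map X).prod (μ.map (U k))) := by rw [hmap]
    _ = ∫ x, ∫ u, h x u ∂(μ.map (U k)) ∂(μ.map X) := by
        rw [MeasureTheory.integral_prod _ hint]
    _ = ∫ ω, ∫ u, h (X ω) u ∂(μ.map (U k)) ∂μ :=
        integral_map (f := fun x => ∫ u, h x u ∂(μ.map (U k))) hX.aemeasurable ((measurable_of_countable _).aestronglyMeasurable)



lemma leafG_def (n : ℕ) (v : ℕ → ℕ) : leafG n v
    = ∑ j ∈ Finset.Icc 1 n, (if ∀ i ∈ Finset.range (n - 1), v i ≠ j then (1:ℝ) else 0) := rfl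

def extendFin {k : ℕ} (x : Fin k → ℕ) : ℕ → ℕ := fun i => if h : i < k then x ⟨i, h⟩ else 0

lemma leafG_bound (n : ℕ) (v : ℕ → ℕ) : 0 ≤ leafG n v ∧ leafG n v ≤ n := by
  constructor
  · refine Finset.sum_nonneg fun j _ => ?_
    split_ifs <;> norm_num
  · calc leafG n v ≤ ∑ _j ∈ Finset.Icc 1 n, (1:ℝ) :=
        Finset.sum_le_sum fun j _ => by split_ifs <;> norm_num
      _ = n := by simp

lemma leafG_dependsOn {n m : ℕ} (hn : n = m + 1) :
    ∀ v w : ℕ → ℕ, (∀ i < m, v i = w i) → leafG n v = leafG n w := by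
  intro v w h
  refine Finset.sum_congr rfl fun j _ => ?_
  have hiff : (∀ i ∈ Finset.range (n - 1), v i ≠ j) ↔ (∀ i ∈ Finset.range (n - 1), w i ≠ j) := by
    constructor
    · intro hh i hi
      have hi' : i < m := by rw [Finset.mem_range] at hi; omega
      rw [← h i hi']; exact hh i hi
    · intro hh i hi
      have hi' : i < m := by rw [Finset.mem_range] at hi; omega
      rw [h i hi']; exact hh i hi
  by_cases hc : ∀ i ∈ Finset.range (n - 1), w i ≠ j
  · rw [if_pos (hiff.2 hc), if_pos hc]
  · rw [if_neg (fun hh => hc (hiff.1 hh)), if_neg hc]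

lemma telescope {θ : ℝ} (hθ : 0 < θ) :
    ∀ (a b : ℕ), 1 ≤ a → a ≤ b →
      ∏ i ∈ Finset.Ico a b, (1 - 1 / (θ + (i:ℝ))) = (θ + (a:ℝ) - 1) / (θ + (b:ℝ) - 1) := by
  intro a b ha hab
  induction b, hab using Nat.le_induction with
  | base =>
    have h1 : (1:ℝ) ≤ a := Nat.one_le_cast.2 ha
    rw [Finset.Ico_self, Finset.prod_empty, div_self (by linarith)]
  | succ b hab ih =>
    have h1 : (1:ℝ) ≤ a := Nat.one_le_cast.2 ha
    have hb : (1:ℝ) ≤ b := le_trans h1 (Nat.cast_le.2 hab)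
    have h2 : θ + (b:ℝ) - 1 ≠ 0 := by linarith
    have h3 : θ + (b:ℝ) ≠ 0 := by linarith
    have h4 : 1 - 1 / (θ + (b:ℝ)) = (θ + (b:ℝ) - 1) / (θ + (b:ℝ)) := by field_simp
    rw [Finset.prod_Ico_succ_top hab, ih, h4, div_mul_div_comm,
      mul_comm (θ + (a:ℝ) - 1) (θ + (b:ℝ) - 1), mul_div_mul_left _ _ h2]
    congr 1
    push_cast
    ring

lemma sum_sq {θ : ℝ} (hθ : 0 < θ) :
    ∀ m : ℕ, 1 ≤ m → 3 * (∑ k ∈ Finset.range m, (θ + (k:ℝ)) ^ 2)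
      ≤ ((m:ℝ) + θ + 2) * (θ + (m:ℝ) - 1) ^ 2 := by
  intro m hm
  induction m, hm using Nat.le_induction with
  | base => simp; nlinarith
  | succ m hm ih =>
    rw [Finset.sum_range_succ]
    have hb : (1:ℝ) ≤ m := Nat.one_le_cast.2 hm
    push_cast
    nlinarith [ih]

section withU
variable {Ω : Type*} [MeasurableSpace Ω] {θ : ℝ} {μ : Measure Ω} {U : ℕ → Ω → ℕ}
  [IsProbabilityMeasure μ]

lemma marg_nonroot (hθ : 0 < θ) (hU : IsHoppeParents θ μ U) {k j : ℕ}
    (h2 : 2 ≤ j) (hj : j ≤ k + 1) : ((μ.map (U k)) {j}).toReal = 1 / (θ + k) := by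
  rw [Measure.map_apply (hU.meas k) (MeasurableSet.singleton j)]
  have hset : U k ⁻¹' {j} = {ω | U k ω = j} := rfl
  have hden : (0:ℝ) < θ + k := by positivity
  rw [hset, hU.nonroot k j h2 hj, ENNReal.toReal_ofReal (by positivity)]

lemma marg_ae_range (hU : IsHoppeParents θ μ U) (k : ℕ) :
    ∀ᵐ u ∂(μ.map (U k)), 1 ≤ u ∧ u ≤ k + 1 := by
  have h1 : (μ.map (U k)) {u : ℕ | 1 ≤ u ∧ u ≤ k + 1} = 1 := by
    rw [Measure.map_apply (hU.meas k) MeasurableSet.of_discrete]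
    exact hU.range k
  rw [ae_iff]
  have heq : {u : ℕ | ¬(1 ≤ u ∧ u ≤ k + 1)} = {u : ℕ | 1 ≤ u ∧ u ≤ k + 1}ᶜ := rfl
  haveI : IsProbabilityMeasure (μ.map (U k)) :=
    Measure.isProbabilityMeasure_map (hU.meas k).aemeasurable
  rw [heq, measure_compl MeasurableSet.of_discrete (by rw [h1]; exact ENNReal.one_ne_top),
    measure_univ, h1, tsub_self]

lemma ae_U0 (hθ : 0 < θ) (hU : IsHoppeParents θ μ U) : ∀ᵐ ω ∂μ, U 0 ω = 1 := by
  have h1 : μ {ω | U 0 ω = 1} = 1 := by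
    have := hU.root 0
    simpa [div_self (ne_of_gt hθ)] using this
  rw [ae_iff]
  have heq : {ω | ¬ U 0 ω = 1} = {ω | U 0 ω = 1}ᶜ := rfl
  have hms : MeasurableSet {ω | U 0 ω = 1} := (hU.meas 0) (MeasurableSet.singleton 1)
  rw [heq, measure_compl hms (by rw [h1]; exact ENNReal.one_ne_top), measure_univ, h1, tsub_self]

lemma Hfun_osc (hθ : 0 < θ) (hU : IsHoppeParents θ μ U) {n m k : ℕ}
    (hn : n = m + 1) (hk : k < m) (v : ℕ → ℕ) (hv : k = 0 ∨ v 0 = 1)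
    (u : ℕ) (hu1 : 1 ≤ u) (hu2 : u ≤ k + 1) :
    Hfun m (fun i => μ.map (U i)) (leafG n) (k + 1) (Function.update v k u)
      ∈ Set.Icc
        (Hfun m (fun i => μ.map (U i)) (leafG n) (k + 1) (Function.update v k 1)
          - (θ + k) / (θ + (m:ℝ) - 1))
        (Hfun m (fun i => μ.map (U i)) (leafG n) (k + 1) (Function.update v k 1)) := by
  set ν : ℕ → Measure ℕ := fun i => μ.map (U i) with hν
  haveI : ∀ i : ℕ, IsProbabilityMeasure (ν i) :=
    fun i => Measure.isProbabilityMeasure_map (hU.meas i).aemeasurable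
  have hm1 : (1:ℝ) ≤ m := by
    have : 1 ≤ m := by omega
    exact_mod_cast this
  have hL0 : 0 ≤ (θ + (k:ℝ)) / (θ + (m:ℝ) - 1) := by
    apply div_nonneg (by positivity) (by linarith)
  by_cases hk0 : k = 0
  · subst hk0
    have : u = 1 := by omega
    subst this
    exact ⟨by linarith, le_rfl⟩
  · have hv0 : v 0 = 1 := hv.resolve_left hk0
    have hdiff := Hfun_eAux_diff (ν := ν) hn hk (k + 1) (by omega) (by omega) v u 1
    have he1 : eAux ν n m k (k + 1) 1 v = 0 := by
      rw [eAux, if_neg]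
      intro hcond
      exact (hcond.2.2 0 (by omega) (by omega)) hv0
    have heu : 0 ≤ eAux ν n m k (k + 1) u v ∧
        eAux ν n m k (k + 1) u v ≤ (θ + (k:ℝ)) / (θ + (m:ℝ) - 1) := by
      rw [eAux]
      split_ifs with hcond
      · have hu2' : 2 ≤ u := by
          rcases Nat.lt_or_ge u 2 with h' | h'
          · exfalso
            have : u = 1 := by omega
            subst this
            exact (hcond.2.2 0 (by omega) (by omega)) hv0
          · exact h'
        have hq : qProd ν m (k + 1) u = (θ + (k:ℝ)) / (θ + (m:ℝ) - 1) := by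
          rw [qProd]
          have hcongr : ∀ i ∈ Finset.Ico (k + 1) m, 1 - ((ν i) {u}).toReal = 1 - 1 / (θ + (i:ℝ)) := by
            intro i hi
            rw [Finset.mem_Ico] at hi
            rw [hν]
            rw [marg_nonroot hθ hU hu2' (by omega)]
          rw [Finset.prod_congr rfl hcongr, telescope hθ (k + 1) m (by omega) (by omega)]
          push_cast
          ring_nf
        constructor
        · rw [hq]; exact hL0
        · rw [hq]
      · exact ⟨le_rfl, hL0⟩
    constructor
    · have := hdiff
      rw [he1] at this
      have h2 := heu.2
      -- this : H(upd u) - H(upd 1) = 0 - eAux u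
      linarith [this, heu.1, h2]
    · have := hdiff
      rw [he1] at this
      linarith [this, heu.1]

end withU

end HoppeAux

set_option maxHeartbeats 1000000 in
/-- Concentration inequality for the number of leaves of a Hoppe tree. -/
theorem hoppe_leaves_concentration
    {Ω : Type*} [MeasurableSpace Ω]
    (θ : ℝ) (hθ : 0 < θ)
    (μ : Measure Ω) [IsProbabilityMeasure μ] (U : ℕ → Ω → ℕ) (hU : IsHoppeParents θ μ U) :
    ∀ n : ℕ, 1 ≤ n → ∀ t : ℝ, 0 < t →
      μ {ω | t ≤ |(hoppeLeafCount U ω n : ℝ) - ∫ ω', (hoppeLeafCount U ω' n : ℝ) ∂μ|}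
        ≤ ENNReal.ofReal (2 * Real.exp (-6 * t ^ 2 / ((n : ℝ) + θ + 1))) := by
  classical
  intro n hn t ht
  rcases eq_or_lt_of_le hn with h1 | h2
  · -- n = 1 : the leaf count is deterministically 1
    have hcount1 : ∀ ω, hoppeLeafCount U ω 1 = 1 := by
      intro ω
      rw [hoppeLeafCount]
      rw [show Finset.Icc 2 1 = ∅ from Finset.Icc_eq_empty (by omega)]
      simp only [Finset.notMem_empty, false_implies, implies_true, Finset.filter_true]
      simp
    have hempty : {ω | t ≤ |(hoppeLeafCount U ω n : ℝ)
        - ∫ ω', (hoppeLeafCount U ω' n : ℝ) ∂μ|} = ∅ := by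
      ext ω
      simp only [Set.mem_setOf_eq, Set.mem_empty_iff_false, iff_false, not_le]
      rw [← h1]
      simp only [hcount1]
      rw [integral_const]
      simp
      linarith
    rw [hempty]
    simp
  · -- n ≥ 2
    have hm1 : 1 ≤ n - 1 := by omega
    set m : ℕ := n - 1 with hmdef
    have hn2 : n = m + 1 := by omega
    set ν : ℕ → Measure ℕ := fun i => μ.map (U i) with hν
    haveI hνP : ∀ i, IsProbabilityMeasure (ν i) :=
      fun i => Measure.isProbabilityMeasure_map (hU.meas i).aemeasurable
    set G : (ℕ → ℕ) → ℝ := HoppeAux.leafG n with hG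
    have hGb : ∀ v, 0 ≤ G v ∧ G v ≤ n := fun v => HoppeAux.leafG_bound n v
    have hGdep : ∀ v w : ℕ → ℕ, (∀ i < m, v i = w i) → G v = G w :=
      HoppeAux.leafG_dependsOn hn2
    set f : Ω → ℝ := fun ω => G (fun i => U i ω) with hf
    -- identification of the leaf count with f
    have hcount : ∀ ω, (hoppeLeafCount U ω n : ℝ) = f ω := by
      intro ω
      simp only [hf, hG]
      rw [hoppeLeafCount, HoppeAux.leafG_def, Finset.card_filter]
      push_cast
      refine Finset.sum_congr rfl fun j _ => ?_
      have hiff : (∀ k ∈ Finset.Icc 2 n, U (k - 2) ω ≠ j)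
          ↔ (∀ i ∈ Finset.range (n - 1), U i ω ≠ j) := by
        constructor
        · intro h i hi
          rw [Finset.mem_range] at hi
          have := h (i + 2) (Finset.mem_Icc.2 ⟨by omega, by omega⟩)
          simpa using this
        · intro h k hk
          rw [Finset.mem_Icc] at hk
          exact h (k - 2) (Finset.mem_range.2 (by omega))
      by_cases hc : ∀ i ∈ Finset.range (n - 1), U i ω ≠ j
      · rw [if_pos (hiff.2 hc), if_pos hc]
      · rw [if_neg (fun hh => hc (hiff.1 hh)), if_neg hc]
    have hE : ∫ ω', (hoppeLeafCount U ω' n : ℝ) ∂μ = ∫ ω, f ω ∂μ :=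
      integral_congr_ae (Filter.Eventually.of_forall fun ω => hcount ω)
    -- measurability of f
    have hfmeas : Measurable f := by
      have hfeq : f = fun ω => ∑ j ∈ Finset.Icc 1 n,
          (if ∀ i ∈ Finset.range (n - 1), U i ω ≠ j then (1:ℝ) else 0) := rfl
      rw [hfeq]
      apply Finset.measurable_sum
      intro j _
      have hset : MeasurableSet {ω | ∀ i ∈ Finset.range (n - 1), U i ω ≠ j} := by
        have : {ω | ∀ i ∈ Finset.range (n - 1), U i ω ≠ j}
            = ⋂ i ∈ Finset.range (n - 1), (U i) ⁻¹' ({j}ᶜ) := by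
          ext ω; simp
        rw [this]
        exact MeasurableSet.biInter (Finset.range (n - 1)).countable_toSet
          (fun i _ => (hU.meas i) ((MeasurableSet.singleton j).compl))
      exact Measurable.ite hset measurable_const measurable_const
    -- Hfun facts
    have hHFb : ∀ k v, 0 ≤ (HoppeAux.Hfun m ν G) k v ∧ (HoppeAux.Hfun m ν G) k v ≤ n := fun k v => HoppeAux.Hfun_bound hGb k v
    set E0 : ℝ := (HoppeAux.Hfun m ν G) 0 (fun _ => 0) with hE0
    have hH0 : ∀ ω, (HoppeAux.Hfun m ν G) 0 (fun i => U i ω) = E0 :=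
      fun ω => HoppeAux.Hfun_dependsOn hGdep 0 _ _ (fun i hi => absurd hi (Nat.not_lt_zero i))
    have hHm : ∀ ω, (HoppeAux.Hfun m ν G) m (fun i => U i ω) = f ω := fun ω => HoppeAux.Hfun_of_ge le_rfl _
    -- step (a)
    have hstepA : ∀ k, k < m →
        ∫ ω, (HoppeAux.Hfun m ν G) (k + 1) (fun i => U i ω) ∂μ = ∫ ω, (HoppeAux.Hfun m ν G) k (fun i => U i ω) ∂μ := by
      intro k hk
      set h : (Fin k → ℕ) → ℕ → ℝ :=
        fun x u => (HoppeAux.Hfun m ν G) (k + 1) (Function.update (HoppeAux.extendFin x) k u) with hh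
      have hC : ∀ x u, |h x u| ≤ n := fun x u => abs_le.2
        ⟨by linarith [(hHFb (k + 1) (Function.update (HoppeAux.extendFin x) k u)).1,
            (hHFb (k + 1) (Function.update (HoppeAux.extendFin x) k u)).2,
            Nat.cast_nonneg (α := ℝ) n],
         (hHFb (k + 1) _).2⟩
      have key := HoppeAux.integral_step μ U hU.meas hU.indep k h n hC
      have e1 : ∀ ω, h (fun i : Fin k => U i ω) (U k ω) = (HoppeAux.Hfun m ν G) (k + 1) (fun i => U i ω) := by
        intro ω
        refine HoppeAux.Hfun_dependsOn hGdep (k + 1) _ _ (fun i hi => ?_)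
        by_cases hik : i = k
        · subst hik; simp
        · rw [Function.update_apply, if_neg hik]
          simp [HoppeAux.extendFin, show i < k by omega]
      have e2 : ∀ ω, (∫ u, h (fun i : Fin k => U i ω) u ∂(ν k)) = (HoppeAux.Hfun m ν G) k (fun i => U i ω) := by
        intro ω
        rw [show (HoppeAux.Hfun m ν G) k (fun i => U i ω)
            = ∫ u, (HoppeAux.Hfun m ν G) (k + 1) (Function.update (fun i => U i ω) k u) ∂(ν k) from
          HoppeAux.Hfun_of_lt hk _]
        refine integral_congr_ae (Filter.Eventually.of_forall fun u => ?_)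
        refine HoppeAux.Hfun_dependsOn hGdep (k + 1) _ _ (fun i hi => ?_)
        by_cases hik : i = k
        · subst hik; simp
        · rw [Function.update_apply, Function.update_apply, if_neg hik, if_neg hik]
          simp [HoppeAux.extendFin, show i < k by omega]
      calc ∫ ω, (HoppeAux.Hfun m ν G) (k + 1) (fun i => U i ω) ∂μ
          = ∫ ω, h (fun i : Fin k => U i ω) (U k ω) ∂μ :=
            integral_congr_ae (Filter.Eventually.of_forall fun ω => (e1 ω).symm)
        _ = ∫ ω, ∫ u, h (fun i : Fin k => U i ω) u ∂(ν k) ∂μ := key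
        _ = ∫ ω, (HoppeAux.Hfun m ν G) k (fun i => U i ω) ∂μ :=
            integral_congr_ae (Filter.Eventually.of_forall fun ω => e2 ω)
    have hExp : ∫ ω, f ω ∂μ = E0 := by
      have hind : ∀ k, k ≤ m → ∫ ω, (HoppeAux.Hfun m ν G) k (fun i => U i ω) ∂μ = E0 := by
        intro k
        induction k with
        | zero =>
          intro _
          rw [integral_congr_ae (Filter.Eventually.of_forall fun ω => hH0 ω)]
          simp
        | succ k ih =>
          intro hk
          rw [hstepA k (by omega), ih (by omega)]
      calc ∫ ω, f ω ∂μ = ∫ ω, (HoppeAux.Hfun m ν G) m (fun i => U i ω) ∂μ :=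
            integral_congr_ae (Filter.Eventually.of_forall fun ω => (hHm ω).symm)
        _ = E0 := hind m le_rfl
    -- the variation bounds
    set L : ℕ → ℝ := fun k => (θ + k) / (θ + (m:ℝ) - 1) with hLdef
    have hmcast : (1:ℝ) ≤ (m:ℝ) := Nat.one_le_cast.2 (by omega)
    have hLpos : ∀ k, 0 < L k := fun k => div_pos (by have := Nat.cast_nonneg (α := ℝ) k; linarith) (by linarith)
    set V : ℝ := ∑ k ∈ Finset.range m, (L k) ^ 2 with hV
    have hVpos : 0 < V :=
      Finset.sum_pos (fun k _ => pow_pos (hLpos k) 2) ⟨0, Finset.mem_range.2 (by omega)⟩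
    have hV3 : 3 * V ≤ (n:ℝ) + θ + 1 := by
      have hsum := HoppeAux.sum_sq hθ m (by omega)
      have hden0 : (0:ℝ) < θ + (m:ℝ) - 1 := by linarith
      have hden : (0:ℝ) < (θ + (m:ℝ) - 1) ^ 2 := pow_pos hden0 2
      have hVeq : V = (∑ k ∈ Finset.range m, (θ + (k:ℝ)) ^ 2) / (θ + (m:ℝ) - 1) ^ 2 := by
        rw [hV, Finset.sum_div]
        exact Finset.sum_congr rfl fun k _ => by rw [hLdef, div_pow]
      rw [hVeq, show ((n:ℝ) + θ + 1) = (m:ℝ) + θ + 2 by rw [hn2]; push_cast; ring,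
        show 3 * ((∑ k ∈ Finset.range m, (θ + (k:ℝ)) ^ 2) / (θ + (m:ℝ) - 1) ^ 2)
          = (3 * ∑ k ∈ Finset.range m, (θ + (k:ℝ)) ^ 2) / (θ + (m:ℝ) - 1) ^ 2 by ring,
        div_le_iff₀ hden]
      nlinarith [hsum]
    -- step (b) : Hoeffding step
    have hstepB : ∀ c : ℝ, ∀ k, k < m →
        ∫ ω, Real.exp (c * (HoppeAux.Hfun m ν G) (k + 1) (fun i => U i ω)) ∂μ
          ≤ Real.exp (c ^ 2 * (L k) ^ 2 / 8)
            * ∫ ω, Real.exp (c * (HoppeAux.Hfun m ν G) k (fun i => U i ω)) ∂μ := by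
      intro c k hk
      set h : (Fin k → ℕ) → ℕ → ℝ :=
        fun x u => Real.exp (c * (HoppeAux.Hfun m ν G) (k + 1) (Function.update (HoppeAux.extendFin x) k u)) with hh
      have habs : ∀ (z : ℝ), 0 ≤ z → z ≤ n → c * z ≤ |c| * n := by
        intro z h0 h1
        calc c * z ≤ |c * z| := le_abs_self _
          _ = |c| * |z| := abs_mul _ _
          _ ≤ |c| * n := mul_le_mul_of_nonneg_left
              (abs_le.2 ⟨by linarith [Nat.cast_nonneg (α := ℝ) n], h1⟩) (abs_nonneg c)
      have hC : ∀ x u, |h x u| ≤ Real.exp (|c| * n) := by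
        intro x u
        rw [hh]
        calc |Real.exp (c * (HoppeAux.Hfun m ν G) (k + 1) (Function.update (HoppeAux.extendFin x) k u))|
            = Real.exp (c * (HoppeAux.Hfun m ν G) (k + 1) (Function.update (HoppeAux.extendFin x) k u)) :=
              abs_of_nonneg (Real.exp_pos _).le
          _ ≤ Real.exp (|c| * n) := Real.exp_le_exp.2 (habs _ (hHFb _ _).1 (hHFb _ _).2)
      have key := HoppeAux.integral_step μ U hU.meas hU.indep k h _ hC
      have e1 : ∀ ω, h (fun i : Fin k => U i ω) (U k ω)
          = Real.exp (c * (HoppeAux.Hfun m ν G) (k + 1) (fun i => U i ω)) := by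
        intro ω
        have hdep := HoppeAux.Hfun_dependsOn (m := m) (ν := ν) (G := G) hGdep (k + 1)
          (Function.update (HoppeAux.extendFin (fun i : Fin k => U i ω)) k (U k ω))
          (fun i => U i ω)
          (fun i hi => by
            by_cases hik : i = k
            · subst hik; simp
            · rw [Function.update_apply, if_neg hik]
              simp [HoppeAux.extendFin, show i < k by omega])
        show Real.exp (c * HoppeAux.Hfun m ν G (k + 1)
          (Function.update (HoppeAux.extendFin (fun i : Fin k => U i ω)) k (U k ω)))
            = Real.exp (c * HoppeAux.Hfun m ν G (k + 1) (fun i => U i ω))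
        rw [hdep]
      -- pointwise a.e. Hoeffding bound on the inner integral
      have hae : ∀ᵐ ω ∂μ, (∫ u, h (fun i : Fin k => U i ω) u ∂(ν k))
          ≤ Real.exp (c * (HoppeAux.Hfun m ν G) k (fun i => U i ω) + c ^ 2 * (L k) ^ 2 / 8) := by
        filter_upwards [HoppeAux.ae_U0 hθ hU] with ω hω
        set v : ℕ → ℕ := HoppeAux.extendFin (fun i : Fin k => U i ω) with hvdef
        have hv0 : k = 0 ∨ v 0 = 1 := by
          by_cases hk0 : k = 0
          · exact Or.inl hk0
          · refine Or.inr ?_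
            rw [hvdef]
            simp only [HoppeAux.extendFin]
            rw [dif_pos (show 0 < k by omega)]
            exact hω
        have hosc : ∀ u : ℕ, 1 ≤ u → u ≤ k + 1 →
            (HoppeAux.Hfun m ν G) (k + 1) (Function.update v k u) ∈ Set.Icc
              ((HoppeAux.Hfun m ν G) (k + 1) (Function.update v k 1) - L k)
              ((HoppeAux.Hfun m ν G) (k + 1) (Function.update v k 1)) :=
          fun u h1 h2 => HoppeAux.Hfun_osc hθ hU hn2 hk v hv0 u h1 h2
        set cst : ℝ := (HoppeAux.Hfun m ν G) (k + 1) (Function.update v k 1) with hcst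
        obtain ⟨a, b, hab, hba, hmem⟩ : ∃ a b : ℝ, a ≤ b ∧ (b - a) ^ 2 = c ^ 2 * (L k) ^ 2 ∧
            ∀ u : ℕ, 1 ≤ u → u ≤ k + 1 →
              c * (HoppeAux.Hfun m ν G) (k + 1) (Function.update v k u) ∈ Set.Icc a b := by
          rcases le_total 0 c with hc | hc
          · refine ⟨c * (cst - L k), c * cst, by nlinarith [hLpos k], by ring, ?_⟩
            intro u h1 h2
            exact ⟨mul_le_mul_of_nonneg_left (hosc u h1 h2).1 hc,
              mul_le_mul_of_nonneg_left (hosc u h1 h2).2 hc⟩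
          · refine ⟨c * cst, c * (cst - L k), by nlinarith [hLpos k], by ring, ?_⟩
            intro u h1 h2
            exact ⟨mul_le_mul_of_nonpos_left (hosc u h1 h2).2 hc,
              mul_le_mul_of_nonpos_left (hosc u h1 h2).1 hc⟩
        have hHoef := HoppeAux.hoeffding_integral (ν k)
          (fun u => c * (HoppeAux.Hfun m ν G) (k + 1) (Function.update v k u)) a b hab
          (by filter_upwards [HoppeAux.marg_ae_range hU k] with u hu
              exact hmem u hu.1 hu.2)
        have hgint : ∫ u, c * (HoppeAux.Hfun m ν G) (k + 1) (Function.update v k u) ∂(ν k) = c * (HoppeAux.Hfun m ν G) k v := by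
          rw [integral_const_mul, ← HoppeAux.Hfun_of_lt hk]
        have hkv : (HoppeAux.Hfun m ν G) k v = (HoppeAux.Hfun m ν G) k (fun i => U i ω) :=
          HoppeAux.Hfun_dependsOn hGdep k _ _ (fun i hi => by
            rw [hvdef]; simp [HoppeAux.extendFin, hi])
        calc (∫ u, h (fun i : Fin k => U i ω) u ∂(ν k))
            = ∫ u, Real.exp (c * (HoppeAux.Hfun m ν G) (k + 1) (Function.update v k u)) ∂(ν k) := rfl
          _ ≤ Real.exp ((∫ u, c * (HoppeAux.Hfun m ν G) (k + 1) (Function.update v k u) ∂(ν k)) + (b - a) ^ 2 / 8) :=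
              hHoef
          _ = Real.exp (c * (HoppeAux.Hfun m ν G) k (fun i => U i ω) + c ^ 2 * (L k) ^ 2 / 8) := by
              rw [hgint, hkv, hba]
      -- integrability of both sides
      have hint1 : Integrable (fun ω => ∫ u, h (fun i : Fin k => U i ω) u ∂(ν k)) μ := by
        have hmeas1 : Measurable fun ω => ∫ u, h (fun i : Fin k => U i ω) u ∂(ν k) :=
          (measurable_of_countable (fun x : Fin k → ℕ => ∫ u, h x u ∂(ν k))).comp
            (measurable_pi_lambda _ fun i => hU.meas i)
        refine Integrable.mono' (integrable_const (Real.exp (|c| * n)))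
          hmeas1.aestronglyMeasurable (Filter.Eventually.of_forall fun ω => ?_)
        rw [Real.norm_eq_abs]
        calc |∫ u, h (fun i : Fin k => U i ω) u ∂(ν k)|
            ≤ ∫ u, |h (fun i : Fin k => U i ω) u| ∂(ν k) := by
              simpa [Real.norm_eq_abs] using MeasureTheory.norm_integral_le_integral_norm
                (μ := ν k) (f := fun u => h (fun i : Fin k => U i ω) u)
          _ ≤ ∫ _, Real.exp (|c| * n) ∂(ν k) := integral_mono
              (HoppeAux.integrable_of_bounded_nat (C := Real.exp (|c| * n))
                (fun u => by rw [abs_abs]; exact hC _ u))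
              (integrable_const _) (fun u => hC _ u)
          _ = Real.exp (|c| * n) := by simp
      have hHFmeas : ∀ k', Measurable (fun ω => (HoppeAux.Hfun m ν G) k' (fun i => U i ω)) := by
        intro k'
        have heq : (fun ω => (HoppeAux.Hfun m ν G) k' (fun i => U i ω))
            = (fun x : Fin k' → ℕ => (HoppeAux.Hfun m ν G) k' (HoppeAux.extendFin x))
              ∘ (fun ω (i : Fin k') => U i ω) := by
          funext ω
          exact HoppeAux.Hfun_dependsOn hGdep k' _ _
            (fun i hi => by simp [HoppeAux.extendFin, hi])
        rw [heq]
        exact (measurable_of_countable _).comp (measurable_pi_lambda _ fun i => hU.meas i)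
      have hint2 : Integrable
          (fun ω => Real.exp (c * (HoppeAux.Hfun m ν G) k (fun i => U i ω) + c ^ 2 * (L k) ^ 2 / 8)) μ := by
        refine Integrable.mono'
          (integrable_const (Real.exp (|c| * n + c ^ 2 * (L k) ^ 2 / 8)))
          (Real.measurable_exp.comp (((hHFmeas k).const_mul c).add_const _)).aestronglyMeasurable
          (Filter.Eventually.of_forall fun ω => ?_)
        rw [Real.norm_eq_abs, abs_of_nonneg (Real.exp_pos _).le]
        exact Real.exp_le_exp.2 (by
          have := habs ((HoppeAux.Hfun m ν G) k (fun i => U i ω)) (hHFb _ _).1 (hHFb _ _).2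
          linarith)
      calc ∫ ω, Real.exp (c * (HoppeAux.Hfun m ν G) (k + 1) (fun i => U i ω)) ∂μ
          = ∫ ω, h (fun i : Fin k => U i ω) (U k ω) ∂μ :=
            integral_congr_ae (Filter.Eventually.of_forall fun ω => (e1 ω).symm)
        _ = ∫ ω, ∫ u, h (fun i : Fin k => U i ω) u ∂(ν k) ∂μ := key
        _ ≤ ∫ ω, Real.exp (c * (HoppeAux.Hfun m ν G) k (fun i => U i ω) + c ^ 2 * (L k) ^ 2 / 8) ∂μ :=
            integral_mono_ae hint1 hint2 hae
        _ = Real.exp (c ^ 2 * (L k) ^ 2 / 8)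
            * ∫ ω, Real.exp (c * (HoppeAux.Hfun m ν G) k (fun i => U i ω)) ∂μ := by
            simp_rw [Real.exp_add]
            rw [integral_mul_const]
            ring
    -- mgf bound
    have hmgf : ∀ c : ℝ, ∫ ω, Real.exp (c * f ω) ∂μ ≤ Real.exp (c * E0 + c ^ 2 * V / 8) := by
      intro c
      have hind : ∀ k, k ≤ m → ∫ ω, Real.exp (c * (HoppeAux.Hfun m ν G) k (fun i => U i ω)) ∂μ
          ≤ Real.exp (c * E0 + c ^ 2 * (∑ i ∈ Finset.range k, (L i) ^ 2) / 8) := by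
        intro k
        induction k with
        | zero =>
          intro _
          rw [integral_congr_ae (Filter.Eventually.of_forall fun ω => by rw [hH0 ω])]
          simp
        | succ k ih =>
          intro hk
          calc ∫ ω, Real.exp (c * (HoppeAux.Hfun m ν G) (k + 1) (fun i => U i ω)) ∂μ
              ≤ Real.exp (c ^ 2 * (L k) ^ 2 / 8)
                * ∫ ω, Real.exp (c * (HoppeAux.Hfun m ν G) k (fun i => U i ω)) ∂μ := hstepB c k (by omega)
            _ ≤ Real.exp (c ^ 2 * (L k) ^ 2 / 8)
                * Real.exp (c * E0 + c ^ 2 * (∑ i ∈ Finset.range k, (L i) ^ 2) / 8) :=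
                mul_le_mul_of_nonneg_left (ih (by omega)) (Real.exp_pos _).le
            _ = Real.exp (c * E0 + c ^ 2 * (∑ i ∈ Finset.range (k + 1), (L i) ^ 2) / 8) := by
                rw [← Real.exp_add, Finset.sum_range_succ]
                congr 1
                ring
      have := hind m le_rfl
      rw [integral_congr_ae (Filter.Eventually.of_forall fun ω => by rw [hHm ω])] at this
      exact this
    -- Chernoff
    set E : ℝ := ∫ ω, f ω ∂μ with hEdef
    set Z : Ω → ℝ := fun ω => f ω - E with hZ
    have hmgfZ : ∀ c : ℝ, mgf Z μ c ≤ Real.exp (c ^ 2 * V / 8) := by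
      intro c
      rw [mgf]
      have hpt : ∀ ω, Real.exp (c * Z ω) = Real.exp (c * f ω) * Real.exp (-(c * E)) := by
        intro ω
        rw [← Real.exp_add, hZ]
        ring_nf
      rw [integral_congr_ae (Filter.Eventually.of_forall hpt), integral_mul_const]
      calc (∫ ω, Real.exp (c * f ω) ∂μ) * Real.exp (-(c * E))
          ≤ Real.exp (c * E0 + c ^ 2 * V / 8) * Real.exp (-(c * E)) :=
            mul_le_mul_of_nonneg_right (hmgf c) (Real.exp_pos _).le
        _ = Real.exp (c ^ 2 * V / 8) := by
            rw [← Real.exp_add, show E = E0 from hExp]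
            ring_nf
    have hZint : ∀ c : ℝ, Integrable (fun ω => Real.exp (c * Z ω)) μ := by
      intro c
      have hZmeas : Measurable Z := hfmeas.sub measurable_const
      refine Integrable.mono' (integrable_const (Real.exp (|c| * ((n:ℝ) + |E|))))
        (Real.measurable_exp.comp (hZmeas.const_mul c)).aestronglyMeasurable
        (Filter.Eventually.of_forall fun ω => ?_)
      rw [Real.norm_eq_abs, abs_of_nonneg (Real.exp_pos _).le]
      apply Real.exp_le_exp.2
      calc c * Z ω ≤ |c * Z ω| := le_abs_self _
        _ = |c| * |Z ω| := abs_mul _ _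
        _ ≤ |c| * ((n:ℝ) + |E|) := by
            refine mul_le_mul_of_nonneg_left ?_ (abs_nonneg c)
            calc |Z ω| ≤ |f ω| + |E| := abs_sub _ _
              _ ≤ (n:ℝ) + |E| := add_le_add_left
                  (abs_le.2 ⟨by linarith [(hGb (fun i => U i ω)).1,
                    Nat.cast_nonneg (α := ℝ) n], (hGb (fun i => U i ω)).2⟩) _
    set c0 : ℝ := 4 * t / V with hc0
    have hc0pos : 0 < c0 := by positivity
    have hexpeq : -c0 * t + c0 ^ 2 * V / 8 = -(2 * t ^ 2 / V) := by
      rw [hc0]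
      field_simp
      ring
    have hup : (μ {ω | t ≤ Z ω}).toReal ≤ Real.exp (-(2 * t ^ 2 / V)) := by
      calc (μ {ω | t ≤ Z ω}).toReal
          ≤ Real.exp (-c0 * t) * mgf Z μ c0 :=
            measure_ge_le_exp_mul_mgf t hc0pos.le (hZint c0)
        _ ≤ Real.exp (-c0 * t) * Real.exp (c0 ^ 2 * V / 8) :=
            mul_le_mul_of_nonneg_left (hmgfZ c0) (Real.exp_pos _).le
        _ = Real.exp (-c0 * t + c0 ^ 2 * V / 8) := (Real.exp_add _ _).symm
        _ = Real.exp (-(2 * t ^ 2 / V)) := by rw [hexpeq]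
    have hlo : (μ {ω | Z ω ≤ -t}).toReal ≤ Real.exp (-(2 * t ^ 2 / V)) := by
      calc (μ {ω | Z ω ≤ -t}).toReal
          ≤ Real.exp (-(-c0) * (-t)) * mgf Z μ (-c0) :=
            measure_le_le_exp_mul_mgf (-t) (by linarith) (hZint (-c0))
        _ ≤ Real.exp (-(-c0) * (-t)) * Real.exp ((-c0) ^ 2 * V / 8) :=
            mul_le_mul_of_nonneg_left (hmgfZ (-c0)) (Real.exp_pos _).le
        _ = Real.exp (-c0 * t + c0 ^ 2 * V / 8) := by
            rw [← Real.exp_add]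
            ring_nf
        _ = Real.exp (-(2 * t ^ 2 / V)) := by rw [hexpeq]
    have hsub : {ω | t ≤ |(hoppeLeafCount U ω n : ℝ) - ∫ ω', (hoppeLeafCount U ω' n : ℝ) ∂μ|}
        ⊆ {ω | t ≤ Z ω} ∪ {ω | Z ω ≤ -t} := by
      intro ω hω
      simp only [Set.mem_setOf_eq] at hω
      rw [hcount ω, hE] at hω
      have hZω : ∀ ω' : Ω, Z ω' = f ω' - ∫ ω'', f ω'' ∂μ := fun ω' => by
        show f ω' - E = _
        rw [hEdef]
      rcases le_or_gt (f ω - ∫ ω'', f ω'' ∂μ) 0 with hc | hc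
      · right
        rw [abs_of_nonpos hc] at hω
        show Z ω ≤ -t
        rw [hZω]
        linarith
      · left
        show t ≤ Z ω
        rw [hZω]
        rw [abs_of_pos hc] at hω
        linarith
    have hofA : μ {ω | t ≤ Z ω} ≤ ENNReal.ofReal (Real.exp (-(2 * t ^ 2 / V))) := by
      rw [← ENNReal.ofReal_toReal (measure_ne_top μ _)]
      exact ENNReal.ofReal_le_ofReal hup
    have hofB : μ {ω | Z ω ≤ -t} ≤ ENNReal.ofReal (Real.exp (-(2 * t ^ 2 / V))) := by
      rw [← ENNReal.ofReal_toReal (measure_ne_top μ _)]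
      exact ENNReal.ofReal_le_ofReal hlo
    have hfinal : μ {ω | t ≤ |(hoppeLeafCount U ω n : ℝ)
        - ∫ ω', (hoppeLeafCount U ω' n : ℝ) ∂μ|}
        ≤ ENNReal.ofReal (2 * Real.exp (-(2 * t ^ 2 / V))) := by
      calc μ {ω | t ≤ |(hoppeLeafCount U ω n : ℝ) - ∫ ω', (hoppeLeafCount U ω' n : ℝ) ∂μ|}
          ≤ μ ({ω | t ≤ Z ω} ∪ {ω | Z ω ≤ -t}) := measure_mono hsub
        _ ≤ μ {ω | t ≤ Z ω} + μ {ω | Z ω ≤ -t} := measure_union_le _ _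
        _ ≤ ENNReal.ofReal (Real.exp (-(2 * t ^ 2 / V)))
            + ENNReal.ofReal (Real.exp (-(2 * t ^ 2 / V))) := add_le_add hofA hofB
        _ = ENNReal.ofReal (2 * Real.exp (-(2 * t ^ 2 / V))) := by
            rw [← ENNReal.ofReal_add (Real.exp_pos _).le (Real.exp_pos _).le]
            ring_nf
    refine le_trans hfinal (ENNReal.ofReal_le_ofReal ?_)
    have hnpos : (0:ℝ) < (n:ℝ) + θ + 1 := by positivity
    have h6 : 6 * t ^ 2 / ((n:ℝ) + θ + 1) ≤ 2 * t ^ 2 / V := by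
      rw [div_le_div_iff₀ hnpos hVpos]
      nlinarith [hV3, sq_nonneg t, mul_le_mul_of_nonneg_left hV3 (show (0:ℝ) ≤ 2 * t ^ 2 by positivity)]
    have hexple : Real.exp (-(2 * t ^ 2 / V)) ≤ Real.exp (-6 * t ^ 2 / ((n:ℝ) + θ + 1)) := by
      apply Real.exp_le_exp.2
      have : -6 * t ^ 2 / ((n:ℝ) + θ + 1) = -(6 * t ^ 2 / ((n:ℝ) + θ + 1)) := by ring
      rw [this]
      linarith
    linarith

end
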